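/- Every vector v ∈ ℝⁿ with ‖v‖₁ ≤ C and ‖v‖_∞ ≤ C/k (k ≤ n positive integers, C > 0) can be written as a convex combination of k-sparse vectors each with ℓ₂ norm at most C/√k. -/

import Mathlib

noncomputable def l1 {m : ℕ} (v : Fin m → ℝ) : ℝ := ∑ i, |v i|

noncomputable def l2 {m : ℕ} (v : Fin m → ℝ) : ℝ := Real.sqrt (∑ i, (v i)^2)

def Sparse {m : ℕ} (k : ℕ) (v : Fin m → ℝ) : Prop :=
  ∃ s : Finset (Fin m), s.card ≤ k ∧ ∀ i ∉ s, v i = 0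

open Finset

/-- indicator vectors of sets of size ≤ k -/
def IndSet (n k : ℕ) : Set (Fin n → ℝ) :=
  {w | ∃ S : Finset (Fin n), S.card ≤ k ∧ w = fun i => if i ∈ S then (1:ℝ) else 0}

lemma boolean_mem_IndSet {n k : ℕ} (u : Fin n → ℝ)
    (hb : ∀ i, u i = 0 ∨ u i = 1) (hsum : (∑ i, u i) ≤ (k : ℝ)) :
    u ∈ IndSet n k := by
  classical
  refine ⟨Finset.univ.filter (fun i => u i = 1), ?_, ?_⟩
  · have h1 : (({i | u i = 1} : Finset (Fin n)).card : ℝ) ≤ ∑ i, u i := by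
      calc (({i | u i = 1} : Finset (Fin n)).card : ℝ)
          = ∑ i ∈ ({i | u i = 1} : Finset (Fin n)), u i := by
            rw [Finset.sum_congr rfl (fun i hi => (Finset.mem_filter.1 hi).2)]
            simp
        _ ≤ ∑ i, u i := by
            refine Finset.sum_le_sum_of_subset_of_nonneg (Finset.subset_univ _) ?_
            intro i _ _
            rcases hb i with h | h <;> simp [h]
    exact_mod_cast h1.trans hsum
  · funext i
    rcases hb i with h | h <;> simp [Finset.mem_filter, h]

lemma frac_decomp {n k : ℕ} :
    ∀ N (u : Fin n → ℝ),
      ({i | 0 < u i ∧ u i < 1} : Finset (Fin n)).card ≤ N →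
      (∀ i, 0 ≤ u i) → (∀ i, u i ≤ 1) → (∑ i, u i) ≤ (k : ℝ) →
      u ∈ convexHull ℝ (IndSet n k) := by
  classical
  intro N
  induction N with
  | zero =>
    intro u hcard h0 h1 hsum
    refine subset_convexHull ℝ _ (boolean_mem_IndSet u ?_ hsum)
    intro i
    have : i ∉ ({i | 0 < u i ∧ u i < 1} : Finset (Fin n)) := by
      intro h
      have := Finset.card_pos.2 ⟨i, h⟩
      omega
    simp only [Finset.mem_filter, Finset.mem_univ, true_and, not_and, not_lt] at this
    rcases lt_or_eq_of_le (h0 i) with hpos | heq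
    · right; linarith [this hpos, h1 i]
    · left; exact heq.symm
  | succ N ih =>
    intro u hcard h0 h1 hsum
    set F : Finset (Fin n) := {i | 0 < u i ∧ u i < 1} with hF
    by_cases hne : F.Nonempty
    · obtain ⟨i, hiF⟩ := hne
      have hi : 0 < u i ∧ u i < 1 := by
        simpa [hF] using hiF
      by_cases h2 : ∃ j ∈ F, j ≠ i
      · -- two fractional coordinates: perturbation argument
        obtain ⟨j, hjF, hji⟩ := h2
        have hj : 0 < u j ∧ u j < 1 := by simpa [hF] using hjF
        set d : Fin n → ℝ := fun l => (if l = i then (1:ℝ) else 0) - (if l = j then 1 else 0)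
          with hd
        have hij : ¬ i = j := fun h => hji h.symm
        have hdi : d i = 1 := by simp [hd, hij]
        have hdj : d j = -1 := by simp [hd, hji]
        have hdo : ∀ l, l ≠ i → l ≠ j → d l = 0 := by
          intro l h1 h2; simp [hd, h1, h2]
        have hdsum : ∑ l, d l = 0 := by
          simp [hd, Finset.sum_sub_distrib]
        set ε₁ := min (1 - u i) (u j) with he1
        set ε₂ := min (u i) (1 - u j) with he2
        have he1pos : 0 < ε₁ := lt_min (by linarith [hi.2]) hj.1
        have he2pos : 0 < ε₂ := lt_min hi.1 (by linarith [hj.2])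
        set u₁ : Fin n → ℝ := fun l => u l + ε₁ * d l with hu1
        set u₂ : Fin n → ℝ := fun l => u l - ε₂ * d l with hu2
        -- bounds
        have hb1 : ∀ l, 0 ≤ u₁ l ∧ u₁ l ≤ 1 := by
          intro l
          by_cases hli : l = i
          · subst hli
            simp only [hu1, hdi, mul_one]
            constructor
            · linarith [hi.1, he1pos.le]
            · have := min_le_left (1 - u l) (u j); linarith
          by_cases hlj : l = j
          · subst hlj
            simp only [hu1, hdj, mul_neg_one]
            constructor
            · have := min_le_right (1 - u i) (u l); linarith
            · linarith [h1 l, he1pos.le]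
          · simp only [hu1, hdo l hli hlj, mul_zero, add_zero]
            exact ⟨h0 l, h1 l⟩
        have hb2 : ∀ l, 0 ≤ u₂ l ∧ u₂ l ≤ 1 := by
          intro l
          by_cases hli : l = i
          · subst hli
            simp only [hu2, hdi, mul_one]
            constructor
            · have := min_le_left (u l) (1 - u j); linarith
            · linarith [h1 l, he2pos.le]
          by_cases hlj : l = j
          · subst hlj
            simp only [hu2, hdj, mul_neg_one]
            constructor
            · linarith [h0 l, he2pos.le]
            · have := min_le_right (u i) (1 - u l); linarith
          · simp only [hu2, hdo l hli hlj, mul_zero, sub_zero]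
            exact ⟨h0 l, h1 l⟩
        -- sums
        have hs1 : ∑ l, u₁ l ≤ (k : ℝ) := by
          simp only [hu1]
          rw [Finset.sum_add_distrib, ← Finset.mul_sum, hdsum, mul_zero, add_zero]
          exact hsum
        have hs2 : ∑ l, u₂ l ≤ (k : ℝ) := by
          simp only [hu2]
          rw [Finset.sum_sub_distrib, ← Finset.mul_sum, hdsum, mul_zero, sub_zero]
          exact hsum
        -- fractional sets shrink
        have hsub1 : ∀ w : Fin n → ℝ, (∀ l, l ≠ i → l ≠ j → w l = u l) →
            ({l | 0 < w l ∧ w l < 1} : Finset (Fin n)) ⊆ F := by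
          intro w hw l hl
          simp only [Finset.mem_filter, Finset.mem_univ, true_and] at hl
          by_cases hli : l = i
          · subst hli; exact hiF
          by_cases hlj : l = j
          · subst hlj; exact hjF
          · rw [hw l hli hlj] at hl
            simp [hF, hl]
        have key : ∀ w : Fin n → ℝ, (∀ l, l ≠ i → l ≠ j → w l = u l) →
            (w i = 1 ∨ w i = 0 ∨ w j = 1 ∨ w j = 0) →
            (∀ l, 0 ≤ w l) → (∀ l, w l ≤ 1) → (∑ l, w l) ≤ (k : ℝ) →
            w ∈ convexHull ℝ (IndSet n k) := by
          intro w hw hbd hw0 hw1 hwsum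
          have hmem : ∃ m ∈ F, m ∉ ({l | 0 < w l ∧ w l < 1} : Finset (Fin n)) := by
            rcases hbd with h | h | h | h
            · exact ⟨i, hiF, by simp [h]⟩
            · exact ⟨i, hiF, by simp [h]⟩
            · exact ⟨j, hjF, by simp [h]⟩
            · exact ⟨j, hjF, by simp [h]⟩
          obtain ⟨m, hmF, hmw⟩ := hmem
          have hsubset : ({l | 0 < w l ∧ w l < 1} : Finset (Fin n)) ⊆ F.erase m := by
            intro l hl
            refine Finset.mem_erase.2 ⟨?_, hsub1 w hw hl⟩
            rintro rfl; exact hmw hl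
          have hcard' : ({l | 0 < w l ∧ w l < 1} : Finset (Fin n)).card ≤ N := by
            have := Finset.card_le_card hsubset
            rw [Finset.card_erase_of_mem hmF] at this
            omega
          exact ih w hcard' hw0 hw1 hwsum
        have hmem1 : u₁ ∈ convexHull ℝ (IndSet n k) := by
          refine key u₁ (fun l hli hlj => by simp [hu1, hdo l hli hlj]) ?_
            (fun l => (hb1 l).1) (fun l => (hb1 l).2) hs1
          rcases min_cases (1 - u i) (u j) with ⟨h, _⟩ | ⟨h, _⟩
          · left; simp only [hu1, hdi, mul_one]; rw [he1, h]; ring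
          · right; right; right; simp only [hu1, hdj, mul_neg_one]; rw [he1, h]; ring
        have hmem2 : u₂ ∈ convexHull ℝ (IndSet n k) := by
          refine key u₂ (fun l hli hlj => by simp [hu2, hdo l hli hlj]) ?_
            (fun l => (hb2 l).1) (fun l => (hb2 l).2) hs2
          rcases min_cases (u i) (1 - u j) with ⟨h, _⟩ | ⟨h, _⟩
          · right; left; simp only [hu2, hdi, mul_one]; rw [he2, h]; ring
          · right; right; left; simp only [hu2, hdj, mul_neg_one]; rw [he2, h]; ring
        -- u is a convex combination of u₁ and u₂
        have hss : 0 < ε₁ + ε₂ := by linarith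
        have hcomb : u = (ε₂ / (ε₁ + ε₂)) • u₁ + (ε₁ / (ε₁ + ε₂)) • u₂ := by
          funext l
          simp only [Pi.add_apply, Pi.smul_apply, smul_eq_mul, hu1, hu2]
          field_simp
          ring
        rw [hcomb]
        exact convex_convexHull ℝ _ hmem1 hmem2
          (by positivity) (by positivity) (by rw [← add_div, div_eq_one_iff_eq hss.ne']; ring)
      · -- exactly one fractional coordinate i
        push_neg at h2
        have hone : ∀ l, l ≠ i → (u l = 0 ∨ u l = 1) := by
          intro l hl
          have : l ∉ F := fun h => hl (h2 l h)
          simp only [hF, Finset.mem_filter, Finset.mem_univ, true_and, not_and, not_lt] at this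
          rcases lt_or_eq_of_le (h0 l) with hpos | heq
          · right; linarith [this hpos, h1 l]
          · left; exact heq.symm
        set A : Finset (Fin n) := {l | u l = 1} with hA
        have hiA : i ∉ A := by
          simp only [hA, Finset.mem_filter, Finset.mem_univ, true_and]
          intro h; linarith [hi.2]
        have hAsum : (A.card : ℝ) + u i ≤ ∑ l, u l := by
          calc (A.card : ℝ) + u i = ∑ l ∈ insert i A, u l := by
                rw [Finset.sum_insert hiA]
                have : ∑ l ∈ A, u l = A.card := by
                  rw [Finset.sum_congr rfl (fun l hl => (Finset.mem_filter.1 hl).2)]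
                  simp
                  rfl
                rw [this]; ring
            _ ≤ ∑ l, u l := by
                refine Finset.sum_le_sum_of_subset_of_nonneg (Finset.subset_univ _) ?_
                intro l _ _; exact h0 l
        have hAk : A.card < k := by
          have : (A.card : ℝ) < k := by linarith [hi.1]
          exact_mod_cast this
        have hw0 : (fun l => if l ∈ A then (1:ℝ) else 0) ∈ IndSet n k :=
          ⟨A, hAk.le, rfl⟩
        have hw1 : (fun l => if l ∈ insert i A then (1:ℝ) else 0) ∈ IndSet n k :=
          ⟨insert i A, by rw [Finset.card_insert_of_notMem hiA]; omega, rfl⟩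
        have hcomb : u = (1 - u i) • (fun l => if l ∈ A then (1:ℝ) else 0)
            + u i • (fun l => if l ∈ insert i A then (1:ℝ) else 0) := by
          funext l
          simp only [Pi.add_apply, Pi.smul_apply, smul_eq_mul]
          by_cases hli : l = i
          · subst hli
            simp [hiA]
          · rcases hone l hli with h | h
            · have hlA : l ∉ A := by
                simp only [hA, Finset.mem_filter, Finset.mem_univ, true_and]
                intro hh; rw [h] at hh; norm_num at hh
              simp [hlA, hli, h]
            · have hlA : l ∈ A := by
                simp [hA, h]
              simp [hlA, h, Finset.mem_insert]
        rw [hcomb]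
        exact convex_convexHull ℝ _ (subset_convexHull ℝ _ hw0) (subset_convexHull ℝ _ hw1)
          (by linarith [hi.2]) hi.1.le (by ring)
    · -- no fractional coordinates
      rw [Finset.not_nonempty_iff_eq_empty] at hne
      refine subset_convexHull ℝ _ (boolean_mem_IndSet u ?_ hsum)
      intro l
      have : l ∉ F := by rw [hne]; exact Finset.notMem_empty l
      simp only [hF, Finset.mem_filter, Finset.mem_univ, true_and, not_and, not_lt] at this
      rcases lt_or_eq_of_le (h0 l) with hpos | heq
      · right; linarith [this hpos, h1 l]
      · left; exact heq.symm


/-- Every vector with `‖v‖₁ ≤ C` and `‖v‖_∞ ≤ C/k` is a convex combination of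
`k`-sparse vectors each with ℓ₂ norm at most `C/√k`. -/
theorem convex_combination_l2_bound
    {n k : ℕ} (hk : 0 < k) (hkn : k ≤ n) {C : ℝ} (hC : 0 < C)
    (v : Fin n → ℝ) (hv1 : l1 v ≤ C) (hvinf : ∀ i, |v i| ≤ C / k) :
    ∃ (M : ℕ) (w : Fin M → Fin n → ℝ) (x : Fin M → ℝ),
      (∀ t, 0 ≤ x t) ∧ (∑ t, x t) = 1 ∧
      (v = ∑ t, x t • w t) ∧
      (∀ t, Sparse k (w t) ∧ l2 (w t) ≤ C / Real.sqrt k) := by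
  classical
  have hkR : (0:ℝ) < k := by exact_mod_cast hk
  -- signs
  set sg : Fin n → ℝ := fun i => if v i < 0 then -1 else 1 with hsg
  have hsgabs : ∀ i, sg i * |v i| = v i := by
    intro i
    by_cases h : v i < 0
    · simp [hsg, h, abs_of_neg h]
    · simp [hsg, h, abs_of_nonneg (not_lt.1 h)]
  have hsgsq : ∀ i, (sg i)^2 = 1 := by
    intro i
    by_cases h : v i < 0 <;> simp [hsg, h]
  -- normalized vector
  set u : Fin n → ℝ := fun i => |v i| * k / C with hu
  have h0 : ∀ i, 0 ≤ u i := fun i => by positivity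
  have h1 : ∀ i, u i ≤ 1 := by
    intro i
    rw [hu]
    rw [div_le_one hC]
    have := hvinf i
    calc |v i| * k ≤ (C / k) * k := by nlinarith [abs_nonneg (v i)]
      _ = C := by field_simp
  have hsum : (∑ i, u i) ≤ (k : ℝ) := by
    have : ∑ i, u i = (∑ i, |v i|) * k / C := by
      rw [hu, ← Finset.sum_div, ← Finset.sum_mul]
    rw [this]
    rw [div_le_iff₀ hC]
    have : (∑ i, |v i|) ≤ C := hv1
    nlinarith
  have hmem : u ∈ convexHull ℝ (IndSet n k) := by
    refine frac_decomp n u ?_ h0 h1 hsum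
    calc ({i | 0 < u i ∧ u i < 1} : Finset (Fin n)).card ≤ Fintype.card (Fin n) :=
        Finset.card_le_univ _
      _ = n := Fintype.card_fin n
  rw [mem_convexHull_iff_exists_fintype] at hmem
  obtain ⟨ι, hfin, x', z, hx0, hx1, hz, hzsum⟩ := hmem
  set M := Fintype.card ι with hM
  set e : Fin M ≃ ι := (Fintype.equivFin ι).symm with he
  refine ⟨M, fun t i => sg i * (C / k) * z (e t) i, fun t => x' (e t), fun t => hx0 _, ?_, ?_, ?_⟩
  · rw [Equiv.sum_comp e x', hx1]
  · funext i
    have hzi : ∑ s, x' s * z s i = u i := by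
      have := congrFun hzsum i
      simpa using this
    have : (∑ t : Fin M, (x' (e t)) • fun i => sg i * (C / k) * z (e t) i) i
        = ∑ t : Fin M, x' (e t) * (sg i * (C / k) * z (e t) i) := by
      simp [Finset.sum_apply]
    rw [this]
    have : ∑ t : Fin M, x' (e t) * (sg i * (C / k) * z (e t) i)
        = sg i * (C / k) * ∑ t : Fin M, x' (e t) * z (e t) i := by
      rw [Finset.mul_sum]; congr 1; funext t; ring
    rw [this, Equiv.sum_comp e (fun s => x' s * z s i), hzi, hu]
    rw [← hsgabs i]
    field_simp
  · intro t
    show Sparse k (fun i => sg i * (C / (k:ℝ)) * z (e t) i) ∧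
      l2 (fun i => sg i * (C / (k:ℝ)) * z (e t) i) ≤ C / Real.sqrt k
    obtain ⟨S, hSk, hzS⟩ := hz (e t)
    constructor
    · refine ⟨S, hSk, fun i hi => ?_⟩
      rw [hzS]
      simp [hi]
    · rw [l2]
      have hbd : (∑ i, (sg i * (C / k) * z (e t) i)^2) ≤ C^2 / k := by
        have : ∀ i, (sg i * (C / k) * z (e t) i)^2
            = (C/k)^2 * (if i ∈ S then (1:ℝ) else 0) := by
          intro i
          rw [hzS]
          by_cases hi : i ∈ S <;> simp [hi, mul_pow, hsgsq i] <;> ring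
        rw [Finset.sum_congr rfl (fun i _ => this i), ← Finset.mul_sum]
        have : ∑ i, (if i ∈ S then (1:ℝ) else 0) = S.card := by simp
        rw [this]
        have hSkR : (S.card : ℝ) ≤ k := by exact_mod_cast hSk
        calc (C/k)^2 * (S.card : ℝ) ≤ (C/k)^2 * k := by nlinarith [sq_nonneg (C/k)]
          _ = C^2 / k := by field_simp
      calc Real.sqrt (∑ i, (sg i * (C / k) * z (e t) i)^2) ≤ Real.sqrt (C^2 / k) :=
            Real.sqrt_le_sqrt hbd
        _ = C / Real.sqrt k := by
            rw [Real.sqrt_div (sq_nonneg C), Real.sqrt_sq hC.le]
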